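/- Let X be a real random variable with characteristic function φ_X. The pair (X, cos) is reasonable (i.e., d ↦ sup_a E[cos(a + dX)] is decreasing on (0,∞)) if and only if t ↦ |φ_X(t)| is decreasing on [0,∞). -/

import Mathlib

open MeasureTheory Set

lemma exp_meas {Ω : Type*} [MeasurableSpace Ω] (X : Ω → ℝ) (hX : Measurable X) (d : ℝ) :
    Measurable (fun ω => Complex.exp (Complex.I * (d * X ω))) := by
  fun_prop

lemma exp_int {Ω : Type*} [MeasurableSpace Ω] (P : Measure Ω) [IsProbabilityMeasure P]
    (X : Ω → ℝ) (hX : Measurable X) (d : ℝ) :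
    Integrable (fun ω => Complex.exp (Complex.I * (d * X ω))) P := by
  apply (integrable_const (1:ℝ)).mono' (exp_meas X hX d).aestronglyMeasurable
  filter_upwards with ω
  rw [Complex.norm_exp]
  simp

lemma exp_I_re (r : ℝ) : (Complex.exp (Complex.I * r)).re = Real.cos r := by
  rw [Complex.exp_re]
  simp

lemma integral_cos_eq {Ω : Type*} [MeasurableSpace Ω] (P : Measure Ω) [IsProbabilityMeasure P]
    (X : Ω → ℝ) (hX : Measurable X) (a d : ℝ) :
    ∫ ω, Real.cos (a + d * X ω) ∂P
      = (Complex.exp (Complex.I * a) * ∫ ω, Complex.exp (Complex.I * (d * X ω)) ∂P).re := by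
  have hint : Integrable
      (fun ω => Complex.exp (Complex.I * a) * Complex.exp (Complex.I * (d * X ω))) P :=
    (exp_int P X hX d).const_mul _
  have h1 : ∀ ω, Complex.exp (Complex.I * a) * Complex.exp (Complex.I * (d * X ω))
      = Complex.exp (Complex.I * ((a + d * X ω : ℝ) : ℂ)) := by
    intro ω
    rw [← Complex.exp_add]
    push_cast
    ring_nf
  rw [← integral_const_mul]
  rw [show (∫ (a_1 : Ω), Complex.exp (Complex.I * a) * Complex.exp (Complex.I * (d * X a_1)) ∂P).re
      = Complex.reCLM (∫ (a_1 : Ω), Complex.exp (Complex.I * a)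
        * Complex.exp (Complex.I * (d * X a_1)) ∂P) from rfl,
    ← Complex.reCLM.integral_comp_comm hint]
  simp only [Complex.reCLM_apply, h1, exp_I_re]

lemma sup_re_rot (z : ℂ) :
    ⨆ a : ℝ, (Complex.exp (Complex.I * a) * z).re = ‖z‖ := by
  have hb : ∀ a : ℝ, (Complex.exp (Complex.I * a) * z).re ≤ ‖z‖ := by
    intro a
    calc (Complex.exp (Complex.I * a) * z).re
        ≤ ‖Complex.exp (Complex.I * a) * z‖ := Complex.re_le_norm _
      _ = ‖z‖ := by
          rw [norm_mul, Complex.norm_exp]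
          simp
  have key : Complex.exp (Complex.I * ((-z.arg : ℝ) : ℂ)) * z = (‖z‖ : ℂ) := by
    have h := Complex.norm_mul_exp_arg_mul_I z
    nth_rw 2 [← h]
    push_cast
    rw [← mul_assoc, mul_comm (Complex.exp _), mul_assoc, ← Complex.exp_add,
      show Complex.I * -(z.arg : ℂ) + z.arg * Complex.I = 0 by ring,
      Complex.exp_zero, mul_one]
  refine le_antisymm (ciSup_le hb) ?_
  have hba : BddAbove (range fun a : ℝ => (Complex.exp (Complex.I * a) * z).re) := by
    refine ⟨‖z‖, ?_⟩
    rintro x ⟨a, rfl⟩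
    exact hb a
  have := le_ciSup hba (-z.arg)
  rwa [key, Complex.ofReal_re] at this

/-- For a real random variable `X` with characteristic function `φ_X`, the pair
`(X, cos)` is reasonable (i.e. `d ↦ sup_a E[cos(a + dX)]` is decreasing on `(0,∞)`) iff
`t ↦ |φ_X(t)|` is decreasing on `[0,∞)`. -/
theorem stmt8 {Ω : Type*} [MeasurableSpace Ω] (P : Measure Ω) [IsProbabilityMeasure P]
    (X : Ω → ℝ) (hX : Measurable X)
    (φ : ℝ → ℂ) (hφ : ∀ t : ℝ, φ t = ∫ ω, Complex.exp (Complex.I * (t * X ω)) ∂P) :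
    AntitoneOn (fun d : ℝ => ⨆ a : ℝ, ∫ ω, Real.cos (a + d * X ω) ∂P) (Ioi 0) ↔
      AntitoneOn (fun t : ℝ => ‖φ t‖) (Ici 0) := by
  have heq : ∀ d : ℝ, (⨆ a : ℝ, ∫ ω, Real.cos (a + d * X ω) ∂P) = ‖φ d‖ := by
    intro d
    rw [← sup_re_rot (φ d)]
    refine iSup_congr fun a => ?_
    rw [hφ d, integral_cos_eq P X hX a d]
  have hle : ∀ t : ℝ, ‖φ t‖ ≤ 1 := by
    intro t
    rw [hφ t]
    calc ‖∫ ω, Complex.exp (Complex.I * (t * X ω)) ∂P‖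
        ≤ ∫ ω, ‖Complex.exp (Complex.I * (t * X ω))‖ ∂P := norm_integral_le_integral_norm _
      _ = 1 := by
          have h1 : ∀ ω, ‖Complex.exp (Complex.I * (t * X ω))‖ = 1 := by
            intro ω
            rw [Complex.norm_exp]
            simp
          simp only [h1, integral_const, probReal_univ, smul_eq_mul, one_mul]
  have hφ0 : ‖φ 0‖ = 1 := by
    rw [hφ 0]
    simp
  simp only [heq]
  constructor
  · intro h s hs t ht hst
    rcases eq_or_lt_of_le (mem_Ici.1 hs) with h0 | h0
    · simp only [← h0, hφ0]
      exact hle t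
    · exact h (mem_Ioi.2 h0) (mem_Ioi.2 (h0.trans_le hst)) hst
  · intro h
    exact h.mono Ioi_subset_Ici_self
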